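/- Let p > 0 and let X₁, X₂, … be real random variables on a common probability space with Σ_{j=1}^∞ ‖X_j‖_{ψ_p} < ∞. Then there exists a random variable L with ‖L‖_{ψ_p} < ∞ such that ‖Σ_{j=1}^N X_j − L‖_{ψ_p} → 0 as N → ∞, and ‖L‖_{ψ_p} ≤ C̃_p Σ_{j=1}^∞ ‖X_j‖_{ψ_p}, where C̃_p = 1 if p ≥ 1 and C̃_p = e^{−1}(e/(p log 2))^{1/p} if 0 < p < 1. Moreover, if X_j ≥ 0 almost surely for every j, then the partial sums Σ_{j=1}^N X_j also converge to L almost surely. -/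

import Mathlib

open MeasureTheory ProbabilityTheory Real Filter Topology
open scoped ENNReal NNReal

noncomputable section

/-- The `ψ_p` quasi-norm of a real random variable:
`inf {B > 0 : E[exp((|X|/B)^p)] ≤ 2}`, with `inf ∅ = ∞`. -/
def psiNorm {Ω : Type*} [MeasureSpace Ω] (p : ℝ) (X : Ω → ℝ) : ℝ≥0∞ :=
  sInf {B : ℝ≥0∞ | ∃ b : ℝ, 0 < b ∧ B = ENNReal.ofReal b ∧
    ∫⁻ ω, ENNReal.ofReal (Real.exp ((|X ω| / b) ^ p)) ∂(ℙ : Measure Ω) ≤ 2}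

namespace PsiPAux

/-- The constant in the theorem. -/
def Kc (p : ℝ) : ℝ :=
  if 1 ≤ p then 1
  else Real.exp (-1) * (Real.exp 1 / (p * Real.log 2)) ^ ((1 : ℝ) / p)

def s1 (p : ℝ) : ℝ := max ((1 - p) / p) 0

def t1 (p : ℝ) : ℝ := s1 p ^ (p⁻¹)

def rc (p : ℝ) : ℝ := (Kc p ^ p)⁻¹

def Phi (p : ℝ) (t : ℝ) : ℝ := Real.exp (max t (t1 p) ^ p) - Real.exp (s1 p)

variable {p : ℝ}

lemma log_two_pos : (0:ℝ) < Real.log 2 := Real.log_pos one_lt_two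

lemma log_two_le_one : Real.log 2 ≤ 1 := by
  have := Real.log_le_sub_one_of_pos (by norm_num : (0:ℝ) < 2)
  linarith

lemma s1_nonneg : 0 ≤ s1 p := le_max_right _ _

lemma t1_nonneg : 0 ≤ t1 p := Real.rpow_nonneg s1_nonneg _

lemma t1_rpow (hp : 0 < p) : t1 p ^ p = s1 p := by
  rw [t1, ← Real.rpow_mul s1_nonneg, inv_mul_cancel₀ hp.ne', Real.rpow_one]

lemma Kc_pos (hp : 0 < p) : 0 < Kc p := by
  unfold Kc
  split_ifs with h
  · norm_num
  · exact mul_pos (Real.exp_pos _)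
      (Real.rpow_pos_of_pos (div_pos (Real.exp_pos _) (mul_pos hp log_two_pos)) _)

lemma Kc_rpow_pos (hp : 0 < p) : 0 < Kc p ^ p := Real.rpow_pos_of_pos (Kc_pos hp) _

lemma rc_pos (hp : 0 < p) : 0 < rc p := inv_pos.2 (Kc_rpow_pos hp)

lemma rc_eq_of_ge (h : 1 ≤ p) : rc p = 1 := by
  rw [rc, Kc, if_pos h, Real.one_rpow, inv_one]

lemma s1_eq_of_ge (h : 1 ≤ p) : s1 p = 0 := by
  rw [s1, max_eq_right]
  exact div_nonpos_iff.2 (Or.inr ⟨by linarith, by linarith⟩)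

lemma rc_eq_of_lt (hp : 0 < p) (h : ¬ 1 ≤ p) : rc p = p * Real.log 2 * Real.exp (p - 1) := by
  have hE : (0:ℝ) < Real.exp 1 / (p * Real.log 2) :=
    div_pos (Real.exp_pos _) (mul_pos hp log_two_pos)
  have hp' : p ≠ 0 := hp.ne'
  rw [rc, Kc, if_neg h, Real.mul_rpow (Real.exp_pos _).le (Real.rpow_nonneg hE.le _),
    ← Real.exp_mul, ← Real.rpow_mul hE.le, one_div, inv_mul_cancel₀ hp', Real.rpow_one,
    Real.exp_sub]
  have h1 : Real.exp (-1 * p) = (Real.exp p)⁻¹ := by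
    rw [neg_one_mul, Real.exp_neg]
  rw [h1]
  have e1 : Real.exp 1 ≠ 0 := (Real.exp_pos _).ne'
  have ep : Real.exp p ≠ 0 := (Real.exp_pos _).ne'
  have hl : Real.log 2 ≠ 0 := log_two_pos.ne'
  field_simp

lemma s1_eq_of_lt (hp : 0 < p) (h : ¬ 1 ≤ p) : s1 p = (1 - p) / p := by
  rw [s1, max_eq_left]
  exact div_nonneg (by linarith [lt_of_not_ge h]) hp.le

lemma rc_le_one (hp : 0 < p) : rc p ≤ 1 := by
  by_cases h : 1 ≤ p
  · rw [rc_eq_of_ge h]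
  · rw [rc_eq_of_lt hp h]
    have h1 : p < 1 := lt_of_not_ge h
    have h2 : Real.exp (p - 1) ≤ 1 := Real.exp_le_one_iff.2 (by linarith)
    have h3 : 0 < Real.exp (p-1) := Real.exp_pos _
    have hpl : p * Real.log 2 ≤ 1 := by nlinarith [log_two_pos, log_two_le_one]
    nlinarith [mul_pos hp log_two_pos]

lemma key_num (hp : 0 < p) : Real.exp (s1 p * rc p) + rc p ≤ 2 := by
  by_cases h : 1 ≤ p
  · rw [rc_eq_of_ge h, s1_eq_of_ge h]
    norm_num
  · have h1 : p < 1 := lt_of_not_ge h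
    rw [rc_eq_of_lt hp h, s1_eq_of_lt hp h]
    set a : ℝ := (1 - p) * Real.exp (p - 1) with ha
    have hsr : (1 - p) / p * (p * Real.log 2 * Real.exp (p - 1)) = a * Real.log 2 := by
      field_simp; ring
    rw [hsr]
    have hexp1 : Real.exp (p - 1) ≤ 1 := Real.exp_le_one_iff.2 (by linarith)
    have hexp0 : 0 < Real.exp (p - 1) := Real.exp_pos _
    have ha0 : 0 ≤ a := by nlinarith
    have ha1 : a ≤ 1 := by nlinarith
    -- exp (a * log 2) ≤ 1 + a by convexity of exp
    have hconv := convexOn_exp.2 (Set.mem_univ (0:ℝ)) (Set.mem_univ (Real.log 2))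
      (by linarith : (0:ℝ) ≤ 1 - a) ha0 (by ring)
    simp only [smul_eq_mul, mul_zero, zero_add, Real.exp_zero, mul_one] at hconv
    rw [Real.exp_log (by norm_num : (0:ℝ) < 2)] at hconv
    have : Real.exp (a * Real.log 2) ≤ 1 + a := by linarith
    nlinarith [log_two_le_one, log_two_pos]


lemma Phi_nonneg (hp : 0 < p) (t : ℝ) : 0 ≤ Phi p t := by
  have h1 : t1 p ^ p ≤ max t (t1 p) ^ p :=
    Real.rpow_le_rpow t1_nonneg (le_max_right _ _) hp.le
  rw [t1_rpow hp] at h1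
  exact sub_nonneg.2 (Real.exp_le_exp.2 h1)

lemma Phi_zero (hp : 0 < p) : Phi p 0 = 0 := by
  rw [Phi, max_eq_right t1_nonneg, t1_rpow hp, sub_self]

lemma Phi_mono (hp : 0 < p) : Monotone (Phi p) := by
  intro x y hxy
  have : max x (t1 p) ^ p ≤ max y (t1 p) ^ p :=
    Real.rpow_le_rpow (le_trans t1_nonneg (le_max_right _ _))
      (max_le_max hxy le_rfl) hp.le
  exact sub_le_sub_right (Real.exp_le_exp.2 this) _

lemma Phi_add_one_le (hp : 0 < p) {t : ℝ} (ht : 0 ≤ t) :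
    Phi p t + 1 ≤ Real.exp (t ^ p) := by
  rcases le_total t (t1 p) with h | h
  · rw [Phi, max_eq_right h, t1_rpow hp, sub_self, zero_add]
    have : (0:ℝ) ≤ t ^ p := Real.rpow_nonneg ht _
    calc (1:ℝ) = Real.exp 0 := Real.exp_zero.symm
      _ ≤ Real.exp (t ^ p) := Real.exp_le_exp.2 this
  · rw [Phi, max_eq_left h]
    have h1 : (1:ℝ) ≤ Real.exp (s1 p) := Real.one_le_exp s1_nonneg
    linarith

/-- Continuity of `fun t => t ^ p` for `0 < p`. -/
lemma continuous_rpow_const (hp : 0 < p) : Continuous fun x : ℝ => x ^ p := by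
  rw [continuous_iff_continuousAt]
  exact fun x => Real.continuousAt_rpow_const x p (Or.inr hp.le)

lemma continuous_Phi (hp : 0 < p) : Continuous (Phi p) :=
  (Real.continuous_exp.comp ((continuous_rpow_const hp).comp
    (continuous_id.max continuous_const))).sub continuous_const

/-- convexity of `exp (u ^ p)` on `[t1 p, ∞)`. -/
lemma convexOn_exp_rpow (hp : 0 < p) :
    ConvexOn ℝ (Set.Ici (t1 p)) fun u : ℝ => Real.exp (u ^ p) := by
  have hInt : interior (Set.Ici (t1 p)) = Set.Ioi (t1 p) := interior_Ici
  apply convexOn_of_hasDerivWithinAt2_nonneg (convex_Ici _)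
    (f' := fun u => Real.exp (u ^ p) * (p * u ^ (p - 1)))
    (f'' := fun u => Real.exp (u ^ p) * (p * u ^ (p - 1)) * (p * u ^ (p - 1))
      + Real.exp (u ^ p) * (p * ((p - 1) * u ^ (p - 1 - 1))))
  · exact (Real.continuous_exp.comp (continuous_rpow_const hp)).continuousOn
  · intro x hx
    rw [hInt] at hx
    have hx0 : 0 < x := lt_of_le_of_lt t1_nonneg hx
    exact (((Real.hasDerivAt_rpow_const (p := p) (Or.inl hx0.ne')).exp)).hasDerivWithinAt
  · intro x hx
    rw [hInt] at hx
    have hx0 : 0 < x := lt_of_le_of_lt t1_nonneg hx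
    have h1 : HasDerivAt (fun u : ℝ => Real.exp (u ^ p))
        (Real.exp (x ^ p) * (p * x ^ (p - 1))) x :=
      (Real.hasDerivAt_rpow_const (p := p) (Or.inl hx0.ne')).exp
    have h2 : HasDerivAt (fun u : ℝ => p * u ^ (p - 1))
        (p * ((p - 1) * x ^ (p - 1 - 1))) x :=
      (Real.hasDerivAt_rpow_const (p := p - 1) (Or.inl hx0.ne')).const_mul p
    exact (h1.mul h2).hasDerivWithinAt
  · intro x hx
    rw [hInt] at hx
    have hx0 : 0 < x := lt_of_le_of_lt t1_nonneg hx
    have key : 0 ≤ p * x ^ p + (p - 1) := by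
      rcases le_or_gt 1 p with h | h
      · have : (0:ℝ) ≤ p * x ^ p := mul_nonneg hp.le (Real.rpow_nonneg hx0.le _)
        linarith
      · have hs : s1 p = (1 - p) / p := by
          rw [s1, max_eq_left]
          exact div_nonneg (by linarith) hp.le
        have h1 : t1 p ^ p ≤ x ^ p := Real.rpow_le_rpow t1_nonneg hx.le hp.le
        rw [t1_rpow hp, hs] at h1
        have h2 : (1 - p) ≤ p * x ^ p := by
          rw [div_le_iff₀ hp] at h1; linarith [h1]
        linarith
    have e1 : x ^ (p-1) * x ^ (p-1) = x ^ (p-1-1) * x ^ p := by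
      rw [← Real.rpow_add hx0, ← Real.rpow_add hx0]; ring_nf
    have hexp : 0 < Real.exp (x ^ p) := Real.exp_pos _
    have hxp1 : 0 < x ^ (p-1-1) := Real.rpow_pos_of_pos hx0 _
    have expand : Real.exp (x ^ p) * (p * x ^ (p - 1)) * (p * x ^ (p - 1))
        + Real.exp (x ^ p) * (p * ((p - 1) * x ^ (p - 1 - 1)))
        = Real.exp (x ^ p) * p * x ^ (p-1-1) * (p * x ^ p + (p - 1)) := by
      linear_combination Real.exp (x ^ p) * p * p * e1
    rw [expand]
    positivity

lemma convexOn_Phi (hp : 0 < p) : ConvexOn ℝ Set.univ (Phi p) := by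
  have himg : (fun t : ℝ => max t (t1 p)) '' Set.univ = Set.Ici (t1 p) := by
    apply Set.eq_of_subset_of_subset
    · rintro y ⟨x, -, rfl⟩
      exact Set.mem_Ici.2 (le_max_right _ _)
    · intro y hy
      exact ⟨y, trivial, max_eq_left (Set.mem_Ici.1 hy)⟩
  have hmax : ConvexOn ℝ Set.univ (fun t : ℝ => max t (t1 p)) := by
    have h : ConvexOn ℝ (Set.univ : Set ℝ) ((id : ℝ → ℝ) ⊔ fun _ => t1 p) :=
      ConvexOn.sup (convexOn_id convex_univ) (convexOn_const _ convex_univ)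
    have he : (id ⊔ fun _ : ℝ => t1 p) = fun t : ℝ => max t (t1 p) := by
      funext t; simp [Pi.sup_apply]
    rwa [he] at h
  have hmono : MonotoneOn (fun u : ℝ => Real.exp (u ^ p))
      ((fun t : ℝ => max t (t1 p)) '' Set.univ) := by
    rw [himg]
    intro x hx y hy hxy
    exact Real.exp_le_exp.2 (Real.rpow_le_rpow (le_trans t1_nonneg hx) hxy hp.le)
  have hg : ConvexOn ℝ ((fun t : ℝ => max t (t1 p)) '' Set.univ)
      (fun u : ℝ => Real.exp (u ^ p)) := by
    rw [himg]; exact convexOn_exp_rpow hp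
  have hcomp := hg.comp hmax hmono
  have : Phi p = (fun u : ℝ => Real.exp (u ^ p)) ∘ (fun t : ℝ => max t (t1 p))
      + fun _ => -Real.exp (s1 p) := by
    funext t; simp [Phi, Function.comp, sub_eq_add_neg]
  rw [this]
  exact hcomp.add_const _



-- Bernoulli-type: (A + B)^r ≤ A^r + r*B for A ≥ 1, B ≥ 0, 0 < r ≤ 1
lemma rpow_add_le {A B r : ℝ} (hA : 1 ≤ A) (hB : 0 ≤ B) (hr0 : 0 < r) (hr1 : r ≤ 1) :
    (A + B) ^ r ≤ A ^ r + r * B := by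
  have hA0 : 0 < A := lt_of_lt_of_le one_pos hA
  have h1 : (A + B) ^ r = A ^ r * (1 + B / A) ^ r := by
    rw [← Real.mul_rpow hA0.le (by positivity)]
    congr 1
    field_simp
  have hs : (-1:ℝ) ≤ B / A := le_trans (by norm_num) (div_nonneg hB hA0.le)
  have h2 : (1 + B / A) ^ r ≤ 1 + r * (B / A) :=
    rpow_one_add_le_one_add_mul_self hs hr0.le hr1
  have hAr : 0 < A ^ r := Real.rpow_pos_of_pos hA0 _
  have h3 : A ^ r * (1 + B / A) ^ r ≤ A ^ r * (1 + r * (B / A)) := by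
    exact mul_le_mul_of_nonneg_left h2 hAr.le
  have h4 : A ^ r * (1 + r * (B / A)) = A ^ r + r * B * (A ^ r / A) := by
    field_simp
  have h5 : A ^ r / A ≤ 1 := by
    rw [div_le_one hA0]
    calc A ^ r ≤ A ^ (1:ℝ) :=
      Real.rpow_le_rpow_of_exponent_le hA hr1
    _ = A := Real.rpow_one A
  have h6 : r * B * (A ^ r / A) ≤ r * B := by
    nlinarith [mul_nonneg hr0.le hB, div_nonneg hAr.le hA0.le]
  calc (A + B) ^ r = A ^ r * (1 + B / A) ^ r := h1
    _ ≤ A ^ r * (1 + r * (B / A)) := h3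
    _ = A ^ r + r * B * (A ^ r / A) := h4
    _ ≤ A ^ r + r * B := by linarith

/-- The main pointwise inequality. -/
lemma exp_rc_le (hp : 0 < p) {t : ℝ} (ht : 0 ≤ t) :
    Real.exp (rc p * t ^ p) ≤ Real.exp (s1 p * rc p) + rc p * Phi p t := by
  have hr0 := rc_pos hp
  have hr1 := rc_le_one hp
  rcases le_total t (t1 p) with h | h
  · have h1 : t ^ p ≤ s1 p := by
      rw [← t1_rpow hp]
      exact Real.rpow_le_rpow ht h hp.le
    have h2 : Real.exp (rc p * t ^ p) ≤ Real.exp (s1 p * rc p) :=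
      Real.exp_le_exp.2 (by nlinarith)
    have h3 : 0 ≤ rc p * Phi p t := mul_nonneg hr0.le (Phi_nonneg hp t)
    linarith
  · have hmax : max t (t1 p) = t := max_eq_left h
    have hA : (1:ℝ) ≤ Real.exp (s1 p) := Real.one_le_exp s1_nonneg
    have hsplit : Real.exp (t ^ p) = Real.exp (s1 p) + Phi p t := by
      rw [Phi, hmax]; ring
    have e1 : Real.exp (rc p * t ^ p) = Real.exp (t ^ p) ^ rc p := by
      rw [← Real.exp_mul, mul_comm]
    have e2 : Real.exp (s1 p * rc p) = Real.exp (s1 p) ^ rc p := by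
      rw [← Real.exp_mul]
    rw [e1, e2, hsplit]
    exact rpow_add_le hA (Phi_nonneg hp t) hr0 hr1

-- first-moment control: v ≤ Mp * exp (v ^ p) for v ≥ 0
def Mp (p : ℝ) : ℝ := Real.exp (-(1 + Real.log p) / p)

lemma Mp_pos : 0 < Mp p := Real.exp_pos _

lemma le_Mp_mul_exp (hp : 0 < p) {v : ℝ} (hv : 0 ≤ v) :
    v ≤ Mp p * Real.exp (v ^ p) := by
  rcases eq_or_lt_of_le hv with rfl | hv0
  · exact mul_nonneg Mp_pos.le (Real.exp_pos _).le
  · have hvp : 0 < v ^ p := Real.rpow_pos_of_pos hv0 _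
    have h1 : Real.log (p * v ^ p) ≤ p * v ^ p - 1 :=
      Real.log_le_sub_one_of_pos (mul_pos hp hvp)
    rw [Real.log_mul hp.ne' hvp.ne', Real.log_rpow hv0] at h1
    have h2 : Real.log v ≤ v ^ p + -(1 + Real.log p) / p := by
      have h3 : p * Real.log v ≤ p * (v ^ p + -(1 + Real.log p) / p) := by
        field_simp
        linarith
      exact le_of_mul_le_mul_left h3 hp
    calc v = Real.exp (Real.log v) := (Real.exp_log hv0).symm
      _ ≤ Real.exp (v ^ p + -(1 + Real.log p) / p) := Real.exp_le_exp.2 h2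
      _ = Mp p * Real.exp (v ^ p) := by rw [Mp, ← Real.exp_add, add_comm]


section Meas
variable {Ω : Type*} [MeasureSpace Ω] [IsProbabilityMeasure (ℙ : Measure Ω)]

lemma meas_integrand {Y : Ω → ℝ} (hY : Measurable Y) (hp : 0 < p) (b : ℝ) :
    Measurable fun ω => ENNReal.ofReal (Real.exp ((|Y ω| / b) ^ p)) :=
  ((Real.continuous_exp.comp ((continuous_rpow_const hp).comp
    (continuous_abs.div_const b))).measurable.comp hY).ennreal_ofReal

lemma meas_phi {Y : Ω → ℝ} (hY : Measurable Y) (hp : 0 < p) (b : ℝ) :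
    Measurable fun ω => ENNReal.ofReal (Phi p (|Y ω| / b)) :=
  (((continuous_Phi hp).comp (continuous_abs.div_const b)).measurable.comp hY).ennreal_ofReal

lemma phi_int_le_one (hp : 0 < p) {Y : Ω → ℝ} (hY : Measurable Y) {b : ℝ} (hb : 0 < b)
    (hint : ∫⁻ ω, ENNReal.ofReal (Real.exp ((|Y ω| / b) ^ p)) ∂(ℙ : Measure Ω) ≤ 2) :
    ∫⁻ ω, ENNReal.ofReal (Phi p (|Y ω| / b)) ∂(ℙ : Measure Ω) ≤ 1 := by
  have hpt : ∀ ω, ENNReal.ofReal (Phi p (|Y ω| / b)) + 1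
      ≤ ENNReal.ofReal (Real.exp ((|Y ω| / b) ^ p)) := by
    intro ω
    have hv : 0 ≤ |Y ω| / b := div_nonneg (abs_nonneg _) hb.le
    calc ENNReal.ofReal (Phi p (|Y ω| / b)) + 1
        = ENNReal.ofReal (Phi p (|Y ω| / b) + 1) := by
          rw [ENNReal.ofReal_add (Phi_nonneg hp _) zero_le_one, ENNReal.ofReal_one]
      _ ≤ _ := ENNReal.ofReal_le_ofReal (Phi_add_one_le hp hv)
  have h1 : ∫⁻ ω, (ENNReal.ofReal (Phi p (|Y ω| / b)) + 1) ∂(ℙ : Measure Ω) ≤ 2 :=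
    le_trans (lintegral_mono hpt) hint
  rw [lintegral_add_right _ measurable_const, lintegral_const, measure_univ, mul_one] at h1
  have h2 : (2:ℝ≥0∞) = 1 + 1 := one_add_one_eq_two.symm
  rw [h2] at h1
  exact (ENNReal.add_le_add_iff_right ENNReal.one_ne_top).1 h1

lemma finite_core (hp : 0 < p) (N : ℕ) (Y : ℕ → Ω → ℝ) (hYm : ∀ j, Measurable (Y j))
    (b : ℕ → ℝ) (hb : ∀ j, 0 < b j)
    (hint : ∀ j, ∫⁻ ω, ENNReal.ofReal (Real.exp ((|Y j ω| / b j) ^ p)) ∂(ℙ : Measure Ω) ≤ 2)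
    {bT : ℝ} (hbT : 0 < bT) (hsumb : ∑ j ∈ Finset.range N, b j ≤ bT) :
    ∫⁻ ω, ENNReal.ofReal
        (Real.exp ((|∑ j ∈ Finset.range N, Y j ω| / (Kc p * bT)) ^ p)) ∂(ℙ : Measure Ω) ≤ 2 := by
  have hK := Kc_pos hp
  have hr0 := rc_pos hp
  set θ : ℕ → ℝ := fun j => b j / bT with hθ
  have hθ0 : ∀ j, 0 ≤ θ j := fun j => div_nonneg (hb j).le hbT.le
  have hθsum : ∑ j ∈ Finset.range N, θ j ≤ 1 := by
    rw [hθ, ← Finset.sum_div, div_le_one hbT]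
    exact hsumb
  have hpt : ∀ ω, ENNReal.ofReal
        (Real.exp ((|∑ j ∈ Finset.range N, Y j ω| / (Kc p * bT)) ^ p))
      ≤ ENNReal.ofReal (Real.exp (s1 p * rc p)) +
        ENNReal.ofReal (rc p) * ∑ j ∈ Finset.range N,
          ENNReal.ofReal (θ j) * ENNReal.ofReal (Phi p (|Y j ω| / b j)) := by
    intro ω
    set S := ∑ j ∈ Finset.range N, Y j ω with hS
    set w := |S| / bT with hw
    have hw0 : 0 ≤ w := div_nonneg (abs_nonneg _) hbT.le
    have hrw : (|S| / (Kc p * bT)) ^ p = rc p * w ^ p := by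
      have h0 : |S| / (Kc p * bT) = w / Kc p := by
        rw [hw, div_div, mul_comm]
      rw [h0, Real.div_rpow hw0 hK.le, rc, div_eq_mul_inv, mul_comm]
    have hwle : w ≤ ∑ j ∈ Finset.range N, θ j * (|Y j ω| / b j) := by
      have h2 : ∀ j ∈ Finset.range N, θ j * (|Y j ω| / b j) = |Y j ω| / bT := by
        intro j _
        have h1 := (hb j).ne'
        have h2 := hbT.ne'
        rw [hθ]
        field_simp
      rw [Finset.sum_congr rfl h2, ← Finset.sum_div, hw]
      gcongr
      exact Finset.abs_sum_le_sum_abs _ _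
    have hjensen : Phi p (∑ j ∈ Finset.range N, θ j * (|Y j ω| / b j))
        ≤ ∑ j ∈ Finset.range N, θ j * Phi p (|Y j ω| / b j) := by
      have hv : 0 ≤ 1 - ∑ j ∈ Finset.range N, θ j := by linarith
      have h := (convexOn_Phi hp).map_add_sum_le (t := Finset.range N) (w := θ)
        (p := fun j => |Y j ω| / b j) (q := 0)
        (fun i _ => hθ0 i) (by ring) (fun i _ => trivial) hv trivial
      simp only [smul_eq_mul, mul_zero, zero_add, Phi_zero hp] at h
      calc Phi p (∑ j ∈ Finset.range N, θ j * (|Y j ω| / b j)) ≤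
          (1 - ∑ j ∈ Finset.range N, θ j) * 0
            + ∑ j ∈ Finset.range N, θ j * Phi p (|Y j ω| / b j) := by
            rw [mul_zero, zero_add]
            exact le_trans (le_of_eq rfl) (by linarith [h])
        _ = ∑ j ∈ Finset.range N, θ j * Phi p (|Y j ω| / b j) := by ring
    have hreal : Real.exp ((|S| / (Kc p * bT)) ^ p)
        ≤ Real.exp (s1 p * rc p) + rc p * ∑ j ∈ Finset.range N,
            θ j * Phi p (|Y j ω| / b j) := by
      rw [hrw]
      have h1 := exp_rc_le hp hw0
      have h2 : Phi p w ≤ ∑ j ∈ Finset.range N, θ j * Phi p (|Y j ω| / b j) :=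
        le_trans (Phi_mono hp hwle) hjensen
      nlinarith [hr0]
    calc ENNReal.ofReal (Real.exp ((|S| / (Kc p * bT)) ^ p))
        ≤ ENNReal.ofReal (Real.exp (s1 p * rc p) + rc p * ∑ j ∈ Finset.range N,
            θ j * Phi p (|Y j ω| / b j)) := ENNReal.ofReal_le_ofReal hreal
      _ = ENNReal.ofReal (Real.exp (s1 p * rc p)) +
          ENNReal.ofReal (rc p * ∑ j ∈ Finset.range N, θ j * Phi p (|Y j ω| / b j)) := by
          rw [ENNReal.ofReal_add (Real.exp_pos _).le]
          exact mul_nonneg hr0.le (Finset.sum_nonneg fun j _ =>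
            mul_nonneg (hθ0 j) (Phi_nonneg hp _))
      _ ≤ ENNReal.ofReal (Real.exp (s1 p * rc p)) +
          ENNReal.ofReal (rc p) * ∑ j ∈ Finset.range N,
            ENNReal.ofReal (θ j) * ENNReal.ofReal (Phi p (|Y j ω| / b j)) := by
          gcongr
          rw [ENNReal.ofReal_mul hr0.le]
          gcongr
          rw [ENNReal.ofReal_sum_of_nonneg
            (fun j _ => mul_nonneg (hθ0 j) (Phi_nonneg hp _))]
          exact le_of_eq (Finset.sum_congr rfl fun j _ => ENNReal.ofReal_mul (hθ0 j))
  have hmeas_phi : ∀ j, Measurable fun ω =>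
      ENNReal.ofReal (θ j) * ENNReal.ofReal (Phi p (|Y j ω| / b j)) :=
    fun j => (meas_phi (hYm j) hp (b j)).const_mul _
  calc ∫⁻ ω, ENNReal.ofReal
        (Real.exp ((|∑ j ∈ Finset.range N, Y j ω| / (Kc p * bT)) ^ p)) ∂(ℙ : Measure Ω)
      ≤ ∫⁻ ω, (ENNReal.ofReal (Real.exp (s1 p * rc p)) +
          ENNReal.ofReal (rc p) * ∑ j ∈ Finset.range N,
            ENNReal.ofReal (θ j) * ENNReal.ofReal (Phi p (|Y j ω| / b j))) ∂(ℙ : Measure Ω) :=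
        lintegral_mono hpt
    _ = ENNReal.ofReal (Real.exp (s1 p * rc p)) +
        ENNReal.ofReal (rc p) * ∑ j ∈ Finset.range N, ENNReal.ofReal (θ j) *
          ∫⁻ ω, ENNReal.ofReal (Phi p (|Y j ω| / b j)) ∂(ℙ : Measure Ω) := by
        rw [lintegral_add_left measurable_const, lintegral_const, measure_univ, mul_one,
          lintegral_const_mul _ (Finset.measurable_sum _ fun j _ => hmeas_phi j),
          lintegral_finset_sum _ fun j _ => hmeas_phi j]
        congr 1
        congr 1
        exact Finset.sum_congr rfl fun j _ =>
          lintegral_const_mul _ (meas_phi (hYm j) hp (b j))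
    _ ≤ ENNReal.ofReal (Real.exp (s1 p * rc p)) +
        ENNReal.ofReal (rc p) * ∑ j ∈ Finset.range N, ENNReal.ofReal (θ j) := by
        gcongr with j hj
        calc ENNReal.ofReal (θ j) *
            ∫⁻ ω, ENNReal.ofReal (Phi p (|Y j ω| / b j)) ∂(ℙ : Measure Ω)
            ≤ ENNReal.ofReal (θ j) * 1 :=
              mul_le_mul_right (phi_int_le_one hp (hYm j) (hb j) (hint j)) _
          _ = ENNReal.ofReal (θ j) := mul_one _
    _ ≤ ENNReal.ofReal (Real.exp (s1 p * rc p)) + ENNReal.ofReal (rc p) * 1 := by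
        gcongr
        rw [← ENNReal.ofReal_sum_of_nonneg fun j _ => hθ0 j, ← ENNReal.ofReal_one]
        exact ENNReal.ofReal_le_ofReal hθsum
    _ ≤ 2 := by
        rw [mul_one, ← ENNReal.ofReal_add (Real.exp_pos _).le hr0.le]
        calc ENNReal.ofReal (Real.exp (s1 p * rc p) + rc p) ≤ ENNReal.ofReal 2 :=
          ENNReal.ofReal_le_ofReal (key_num hp)
        _ = 2 := by norm_num


lemma psiNorm_congr_abs (f g : Ω → ℝ) (h : ∀ ω, |f ω| = |g ω|) :
    psiNorm p f = psiNorm p g := by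
  unfold psiNorm
  congr 1
  ext B
  constructor
  · rintro ⟨b, hb, rfl, hi⟩
    refine ⟨b, hb, rfl, ?_⟩
    have he : (fun ω => ENNReal.ofReal (Real.exp ((|g ω| / b) ^ p)))
        = fun ω => ENNReal.ofReal (Real.exp ((|f ω| / b) ^ p)) := by
      funext ω; rw [h ω]
    rwa [he]
  · rintro ⟨b, hb, rfl, hi⟩
    refine ⟨b, hb, rfl, ?_⟩
    have he : (fun ω => ENNReal.ofReal (Real.exp ((|f ω| / b) ^ p)))
        = fun ω => ENNReal.ofReal (Real.exp ((|g ω| / b) ^ p)) := by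
      funext ω; rw [h ω]
    rwa [he]

lemma limit_core (hp : 0 < p) (Y : ℕ → Ω → ℝ) (hYm : ∀ j, Measurable (Y j))
    (b : ℕ → ℝ) (hb : ∀ j, 0 < b j) (hbs : Summable b)
    (hint : ∀ j, ∫⁻ ω, ENNReal.ofReal (Real.exp ((|Y j ω| / b j) ^ p)) ∂(ℙ : Measure Ω) ≤ 2)
    (M : Ω → ℝ)
    (hae : ∀ᵐ ω ∂(ℙ : Measure Ω),
      Tendsto (fun N => ∑ j ∈ Finset.range N, Y j ω) atTop (𝓝 (M ω))) :
    ∫⁻ ω, ENNReal.ofReal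
      (Real.exp ((|M ω| / (Kc p * ∑' j, b j)) ^ p)) ∂(ℙ : Measure Ω) ≤ 2 := by
  set bT := ∑' j, b j with hbTdef
  have hbT0 : 0 < bT := lt_of_lt_of_le (hb 0) (Summable.le_tsum hbs 0 fun j _ => (hb j).le)
  set c := Kc p * bT with hc
  have hFc : Continuous fun x : ℝ => ENNReal.ofReal (Real.exp ((|x| / c) ^ p)) :=
    ENNReal.continuous_ofReal.comp (Real.continuous_exp.comp
      ((continuous_rpow_const hp).comp (continuous_abs.div_const c)))
  have hgmeas : ∀ N : ℕ, Measurable fun ω =>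
      ENNReal.ofReal (Real.exp ((|∑ j ∈ Finset.range N, Y j ω| / c) ^ p)) :=
    fun N => meas_integrand (Finset.measurable_sum _ fun j _ => hYm j) hp c
  have hglim : ∀ᵐ ω ∂(ℙ : Measure Ω),
      ENNReal.ofReal (Real.exp ((|M ω| / c) ^ p)) =
        Filter.liminf (fun N => ENNReal.ofReal
          (Real.exp ((|∑ j ∈ Finset.range N, Y j ω| / c) ^ p))) atTop := by
    filter_upwards [hae] with ω hω
    exact (Filter.Tendsto.liminf_eq ((hFc.tendsto (M ω)).comp hω)).symm
  calc ∫⁻ ω, ENNReal.ofReal (Real.exp ((|M ω| / c) ^ p)) ∂(ℙ : Measure Ω)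
      = ∫⁻ ω, Filter.liminf (fun N => ENNReal.ofReal
          (Real.exp ((|∑ j ∈ Finset.range N, Y j ω| / c) ^ p))) atTop ∂(ℙ : Measure Ω) :=
        lintegral_congr_ae hglim
    _ ≤ Filter.liminf (fun N => ∫⁻ ω, ENNReal.ofReal
          (Real.exp ((|∑ j ∈ Finset.range N, Y j ω| / c) ^ p)) ∂(ℙ : Measure Ω)) atTop :=
        lintegral_liminf_le hgmeas
    _ ≤ Filter.liminf (fun _ : ℕ => (2:ℝ≥0∞)) atTop :=
        Filter.liminf_le_liminf (Filter.Eventually.of_forall fun N =>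
          finite_core hp N Y hYm b hb hint hbT0
            (Summable.sum_le_tsum _ (fun j _ => (hb j).le) hbs))
    _ = 2 := Filter.liminf_const _

lemma exists_bs (hp : 0 < p) (Y : ℕ → Ω → ℝ)
    (hsum : ∑' j, psiNorm p (Y j) ≠ ⊤) {δ : ℝ≥0∞} (hδ : δ ≠ 0) :
    ∃ bs : ℕ → ℝ, (∀ j, 0 < bs j) ∧ Summable bs ∧
      (∀ j, ∫⁻ ω, ENNReal.ofReal (Real.exp ((|Y j ω| / bs j) ^ p)) ∂(ℙ : Measure Ω) ≤ 2) ∧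
      ∑' j, ENNReal.ofReal (bs j) ≤ ∑' j, psiNorm p (Y j) + δ := by
  obtain ⟨ε', hε'pos, hε'sum⟩ := ENNReal.exists_pos_sum_of_countable' hδ ℕ
  have hBlt : ∀ j, psiNorm p (Y j) ≠ ⊤ := fun j => ne_top_of_le_ne_top hsum (ENNReal.le_tsum j)
  have hwit : ∀ j, ∃ bj : ℝ, 0 < bj ∧ ENNReal.ofReal bj < psiNorm p (Y j) + ε' j ∧
      ∫⁻ ω, ENNReal.ofReal (Real.exp ((|Y j ω| / bj) ^ p)) ∂(ℙ : Measure Ω) ≤ 2 := by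
    intro j
    have h1 : psiNorm p (Y j) < psiNorm p (Y j) + ε' j :=
      ENNReal.lt_add_right (hBlt j) (hε'pos j).ne'
    rw [psiNorm] at h1
    obtain ⟨x, hx, hxlt⟩ := sInf_lt_iff.1 h1
    obtain ⟨bj, hbj0, rfl, hintj⟩ := hx
    exact ⟨bj, hbj0, hxlt, hintj⟩
  choose bs hbs0 hbslt hbsint using hwit
  have hε'ne : ∑' i, ε' i ≠ ⊤ := (lt_of_lt_of_le hε'sum le_top).ne
  have hmid : ∑' j, ENNReal.ofReal (bs j) ≤ ∑' j, psiNorm p (Y j) + ∑' i, ε' i := by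
    calc ∑' j, ENNReal.ofReal (bs j) ≤ ∑' j, (psiNorm p (Y j) + ε' j) :=
        ENNReal.tsum_le_tsum fun j => (hbslt j).le
      _ = ∑' j, psiNorm p (Y j) + ∑' i, ε' i := ENNReal.tsum_add
  have hofsum : ∑' j, ENNReal.ofReal (bs j) ≤ ∑' j, psiNorm p (Y j) + δ :=
    le_trans hmid (add_le_add_right hε'sum.le _)
  have hne : ∑' j, ENNReal.ofReal (bs j) ≠ ⊤ :=
    ne_top_of_le_ne_top (ENNReal.add_ne_top.2 ⟨hsum, hε'ne⟩) hmid
  have hsummable : Summable bs := by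
    have h2 := ENNReal.summable_toReal hne
    have h3 : (fun j => (ENNReal.ofReal (bs j)).toReal) = bs :=
      funext fun j => ENNReal.toReal_ofReal (hbs0 j).le
    rwa [h3] at h2
  exact ⟨bs, hbs0, hsummable, hbsint, hofsum⟩

lemma psiNorm_limit_le (hp : 0 < p) (Y : ℕ → Ω → ℝ) (hYm : ∀ j, Measurable (Y j))
    (hsum : ∑' j, psiNorm p (Y j) ≠ ⊤) (M : Ω → ℝ)
    (hae : ∀ᵐ ω ∂(ℙ : Measure Ω),
      Tendsto (fun N => ∑ j ∈ Finset.range N, Y j ω) atTop (𝓝 (M ω))) :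
    psiNorm p M ≤ ENNReal.ofReal (Kc p) * ∑' j, psiNorm p (Y j) := by
  apply ENNReal.le_of_forall_pos_le_add
  intro ε hε hlt
  set δ : ℝ≥0∞ := (ε : ℝ≥0∞) / (ENNReal.ofReal (Kc p) + 1) with hδdef
  have hKne : (ENNReal.ofReal (Kc p) + 1) ≠ 0 := by simp
  have hKnt : (ENNReal.ofReal (Kc p) + 1) ≠ ⊤ :=
    ENNReal.add_ne_top.2 ⟨ENNReal.ofReal_ne_top, ENNReal.one_ne_top⟩
  have hδ0 : δ ≠ 0 := by
    rw [hδdef]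
    simp only [ne_eq, ENNReal.div_eq_zero_iff, not_or]
    exact ⟨by exact_mod_cast hε.ne', hKnt⟩
  obtain ⟨bs, hbs0, hsummable, hbsint, hofsum⟩ := exists_bs hp Y hsum hδ0
  set bT := ∑' j, bs j with hbTdef
  have hbT0 : 0 < bT := lt_of_lt_of_le (hbs0 0) (Summable.le_tsum hsummable 0 fun j _ => (hbs0 j).le)
  have hcore := limit_core hp Y hYm bs hbs0 hsummable hbsint M hae
  have hle : psiNorm p M ≤ ENNReal.ofReal (Kc p * bT) := by
    apply sInf_le
    exact ⟨Kc p * bT, mul_pos (Kc_pos hp) hbT0, rfl, hcore⟩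
  have hofbT : ENNReal.ofReal bT = ∑' j, ENNReal.ofReal (bs j) :=
    ENNReal.ofReal_tsum_of_nonneg (fun j => (hbs0 j).le) hsummable
  have hKδ : ENNReal.ofReal (Kc p) * δ ≤ ε := by
    rw [hδdef]
    calc ENNReal.ofReal (Kc p) * ((ε : ℝ≥0∞) / (ENNReal.ofReal (Kc p) + 1))
        ≤ (ENNReal.ofReal (Kc p) + 1) * ((ε : ℝ≥0∞) / (ENNReal.ofReal (Kc p) + 1)) := by
          gcongr
          exact le_self_add
      _ = ε := ENNReal.mul_div_cancel hKne hKnt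
  calc psiNorm p M ≤ ENNReal.ofReal (Kc p * bT) := hle
    _ = ENNReal.ofReal (Kc p) * ENNReal.ofReal bT := ENNReal.ofReal_mul (Kc_pos hp).le
    _ ≤ ENNReal.ofReal (Kc p) * (∑' j, psiNorm p (Y j) + δ) := by
        rw [hofbT]
        exact mul_le_mul_right hofsum _
    _ = ENNReal.ofReal (Kc p) * ∑' j, psiNorm p (Y j) + ENNReal.ofReal (Kc p) * δ :=
        mul_add _ _ _
    _ ≤ ENNReal.ofReal (Kc p) * ∑' j, psiNorm p (Y j) + ε := add_le_add_right hKδ _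

end Meas
end PsiPAux

open PsiPAux in
/-- `ψ_p`-triangle inequality for infinite sums, up to a constant. -/
theorem psi_p_triangle_inequality_infinite_sums
    (p : ℝ) (hp : 0 < p)
    (Ω : Type*) [MeasureSpace Ω] [IsProbabilityMeasure (ℙ : Measure Ω)]
    (X : ℕ → Ω → ℝ) (hmeas : ∀ j, Measurable (X j))
    (hsum : ∑' j, psiNorm p (X j) < ⊤) :
    ∃ L : Ω → ℝ, psiNorm p L < ⊤ ∧
      Tendsto (fun N => psiNorm p (fun ω => (∑ j ∈ Finset.range N, X j ω) - L ω))
        atTop (𝓝 0) ∧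
      psiNorm p L ≤
        ENNReal.ofReal
            (if 1 ≤ p then 1
             else Real.exp (-1) * (Real.exp 1 / (p * Real.log 2)) ^ ((1 : ℝ) / p)) *
          ∑' j, psiNorm p (X j) ∧
      ((∀ j, ∀ᵐ ω ∂(ℙ : Measure Ω), 0 ≤ X j ω) →
        ∀ᵐ ω ∂(ℙ : Measure Ω),
          Tendsto (fun N => ∑ j ∈ Finset.range N, X j ω) atTop (𝓝 (L ω))) := by
  have hKeq : ENNReal.ofReal
      (if 1 ≤ p then 1
       else Real.exp (-1) * (Real.exp 1 / (p * Real.log 2)) ^ ((1 : ℝ) / p))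
      = ENNReal.ofReal (Kc p) := rfl
  obtain ⟨bs, hbs0, hsummable, hbsint, hofsum⟩ :=
    exists_bs hp X hsum.ne (δ := 1) one_ne_zero
  -- first moment bounds
  have hint_abs : ∀ j, ∫⁻ ω, ENNReal.ofReal |X j ω| ∂(ℙ : Measure Ω)
      ≤ ENNReal.ofReal (Mp p * bs j) * 2 := by
    intro j
    have hpt : ∀ ω, ENNReal.ofReal |X j ω| ≤ ENNReal.ofReal (Mp p * bs j) *
        ENNReal.ofReal (Real.exp ((|X j ω| / bs j) ^ p)) := by
      intro ω
      rw [← ENNReal.ofReal_mul (mul_nonneg Mp_pos.le (hbs0 j).le)]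
      apply ENNReal.ofReal_le_ofReal
      have h1 := le_Mp_mul_exp hp (div_nonneg (abs_nonneg (X j ω)) (hbs0 j).le)
      have h2 : |X j ω| = bs j * (|X j ω| / bs j) := by
        rw [← mul_div_assoc, mul_div_cancel_left₀ _ (hbs0 j).ne']
      calc |X j ω| = bs j * (|X j ω| / bs j) := h2
        _ ≤ bs j * (Mp p * Real.exp ((|X j ω| / bs j) ^ p)) :=
            mul_le_mul_of_nonneg_left h1 (hbs0 j).le
        _ = Mp p * bs j * Real.exp ((|X j ω| / bs j) ^ p) := by ring
    calc ∫⁻ ω, ENNReal.ofReal |X j ω| ∂(ℙ : Measure Ω)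
        ≤ ∫⁻ ω, ENNReal.ofReal (Mp p * bs j) *
            ENNReal.ofReal (Real.exp ((|X j ω| / bs j) ^ p)) ∂(ℙ : Measure Ω) :=
          lintegral_mono hpt
      _ = ENNReal.ofReal (Mp p * bs j) * ∫⁻ ω,
            ENNReal.ofReal (Real.exp ((|X j ω| / bs j) ^ p)) ∂(ℙ : Measure Ω) :=
          lintegral_const_mul _ (meas_integrand (hmeas j) hp _)
      _ ≤ ENNReal.ofReal (Mp p * bs j) * 2 := mul_le_mul_right (hbsint j) _
  have hbsne : ∑' j, ENNReal.ofReal (bs j) ≠ ⊤ :=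
    ne_top_of_le_ne_top (ENNReal.add_ne_top.2 ⟨hsum.ne, ENNReal.one_ne_top⟩) hofsum
  have habs : ∀ᵐ ω ∂(ℙ : Measure Ω), Summable fun j => X j ω := by
    have hfin : ∫⁻ ω, ∑' j, ENNReal.ofReal |X j ω| ∂(ℙ : Measure Ω) ≠ ⊤ := by
      rw [lintegral_tsum fun j => ((hmeas j).abs.ennreal_ofReal).aemeasurable]
      have hb2 : ∀ j, ENNReal.ofReal (Mp p * bs j) * 2
          = 2 * ENNReal.ofReal (Mp p) * ENNReal.ofReal (bs j) := by
        intro j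
        rw [ENNReal.ofReal_mul Mp_pos.le]
        ring
      have hbound : ∑' j, ∫⁻ ω, ENNReal.ofReal |X j ω| ∂(ℙ : Measure Ω)
          ≤ 2 * ENNReal.ofReal (Mp p) * ∑' j, ENNReal.ofReal (bs j) := by
        calc ∑' j, ∫⁻ ω, ENNReal.ofReal |X j ω| ∂(ℙ : Measure Ω)
            ≤ ∑' j, ENNReal.ofReal (Mp p * bs j) * 2 := ENNReal.tsum_le_tsum hint_abs
          _ = 2 * ENNReal.ofReal (Mp p) * ∑' j, ENNReal.ofReal (bs j) := by
              rw [tsum_congr hb2, ENNReal.tsum_mul_left]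
      exact ne_top_of_le_ne_top
        (ENNReal.mul_ne_top (ENNReal.mul_ne_top (by norm_num) ENNReal.ofReal_ne_top) hbsne)
        hbound
    have hael := ae_lt_top (Measurable.ennreal_tsum fun j => (hmeas j).abs.ennreal_ofReal) hfin
    filter_upwards [hael] with ω hω
    have h1 : Summable fun j => (ENNReal.ofReal |X j ω|).toReal :=
      ENNReal.summable_toReal hω.ne
    have h2 : (fun j => (ENNReal.ofReal |X j ω|).toReal) = fun j => |X j ω| :=
      funext fun j => ENNReal.toReal_ofReal (abs_nonneg _)
    rw [h2] at h1
    exact h1.of_abs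
  set L : Ω → ℝ := fun ω => ∑' j, X j ω with hL
  have haeL : ∀ᵐ ω ∂(ℙ : Measure Ω),
      Tendsto (fun N => ∑ j ∈ Finset.range N, X j ω) atTop (𝓝 (L ω)) := by
    filter_upwards [habs] with ω hω
    exact hω.hasSum.tendsto_sum_nat
  have hboundL : psiNorm p L ≤ ENNReal.ofReal (Kc p) * ∑' j, psiNorm p (X j) :=
    psiNorm_limit_le hp X hmeas hsum.ne L haeL
  have hKsum_lt : ENNReal.ofReal (Kc p) * ∑' j, psiNorm p (X j) < ⊤ :=
    ENNReal.mul_lt_top ENNReal.ofReal_lt_top hsum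
  refine ⟨L, lt_of_le_of_lt hboundL hKsum_lt, ?_, by rw [hKeq]; exact hboundL, fun _ => haeL⟩
  -- tail convergence
  have htail : ∀ N, psiNorm p (fun ω => (∑ j ∈ Finset.range N, X j ω) - L ω)
      ≤ ENNReal.ofReal (Kc p) * ∑' j, psiNorm p (X (N + j)) := by
    intro N
    have hcongr : psiNorm p (fun ω => (∑ j ∈ Finset.range N, X j ω) - L ω)
        = psiNorm p (fun ω => L ω - ∑ j ∈ Finset.range N, X j ω) :=
      psiNorm_congr_abs _ _ fun ω => abs_sub_comm _ _
    rw [hcongr]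
    have htailsum : ∑' j, psiNorm p (X (N + j)) ≠ ⊤ := by
      have h1 : ∑' j, psiNorm p (X (N + j)) ≤ ∑' i, psiNorm p (X i) :=
        ENNReal.tsum_comp_le_tsum_of_injective (add_right_injective N)
          fun i => psiNorm p (X i)
      exact ne_top_of_le_ne_top hsum.ne h1
    apply psiNorm_limit_le hp (fun j => X (N + j)) (fun j => hmeas _) htailsum
    filter_upwards [haeL] with ω hω
    have h2 : ∀ m, ∑ j ∈ Finset.range m, X (N + j) ω
        = (∑ j ∈ Finset.range (N + m), X j ω) - ∑ j ∈ Finset.range N, X j ω := by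
      intro m
      rw [Finset.sum_range_add (fun j => X j ω) N m]
      ring
    have h3 : Tendsto (fun m => (∑ j ∈ Finset.range (N + m), X j ω)
        - ∑ j ∈ Finset.range N, X j ω) atTop
        (𝓝 (L ω - ∑ j ∈ Finset.range N, X j ω)) := by
      have h4 : Tendsto (fun m => ∑ j ∈ Finset.range (N + m), X j ω) atTop (𝓝 (L ω)) := by
        have h5 := hω.comp (tendsto_add_atTop_nat N)
        have h6 : ((fun N' => ∑ j ∈ Finset.range N', X j ω) ∘ fun m => m + N)
            = fun m => ∑ j ∈ Finset.range (N + m), X j ω := by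
          funext m
          simp [add_comm]
        rwa [h6] at h5
      exact h4.sub_const _
    exact Tendsto.congr (fun m => (h2 m).symm) h3
  have hT0 : Tendsto (fun N => ∑' j, psiNorm p (X (j + N))) atTop (𝓝 0) :=
    ENNReal.tendsto_sum_nat_add _ hsum.ne
  have hT : Tendsto (fun N => ENNReal.ofReal (Kc p) * ∑' j, psiNorm p (X (j + N)))
      atTop (𝓝 0) := by
    have h1 := ENNReal.Tendsto.const_mul (a := ENNReal.ofReal (Kc p)) hT0
      (Or.inr ENNReal.ofReal_ne_top)
    simpa using h1
  apply tendsto_of_tendsto_of_tendsto_of_le_of_le tendsto_const_nhds hT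
  · intro N
    exact zero_le
  · intro N
    calc psiNorm p (fun ω => (∑ j ∈ Finset.range N, X j ω) - L ω)
        ≤ ENNReal.ofReal (Kc p) * ∑' j, psiNorm p (X (N + j)) := htail N
      _ = ENNReal.ofReal (Kc p) * ∑' j, psiNorm p (X (j + N)) := by
          congr 1
          exact tsum_congr fun j => by rw [add_comm]
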